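/- Let k be a commutative ring, G a finite group, and K, H ≤ G. Then the Mackey decomposition holds for Hochschild-cohomology restriction and transfer: r^G_K ∘ t^G_H = Σ_{g ∈ [K\G/H]} t^K_{K ∩ gHg⁻¹} ∘ r^{gHg⁻¹}_{K ∩ gHg⁻¹} ∘ c_{g,H}, as graded k-linear maps HH*(kH) → HH*(kK), where the sum runs over representatives of the (K,H)-double cosets in G. -/
import Mathlib


open Pointwise

private lemma aux_cancel {G : Type*} [Group G] {s₁ s₂ u₁ u₂ : G}
    (h : s₁ * u₁ = s₂ * u₂) : u₂ = (s₁⁻¹ * s₂)⁻¹ * u₁ := by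
  rw [mul_inv_rev, inv_inv, mul_assoc, h, inv_mul_cancel_left]

private lemma aux2 {G : Type*} [Group G] {s₁ s₂ u₁ u₂ : G}
    (h : s₁ * u₁ = s₂ * u₂) : s₁⁻¹ * s₂ = u₁ * u₂⁻¹ := by
  rw [aux_cancel h]; group

private lemma mem_conj {G : Type*} [Group G] (H : Subgroup G) (g x : G) :
    x ∈ H.map (MulAut.conj g).toMonoidHom ↔ ∃ h ∈ H, g * h * g⁻¹ = x := by
  simp [Subgroup.mem_map]

/-- Mackey decomposition for restriction and transfer in Hochschild
cohomology of group algebras: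
`r^G_K ∘ t^G_H = Σ_{g ∈ [K\G/H]} t^K_{K∩ᵍH} ∘ r^{ᵍH}_{K∩ᵍH} ∘ c_{g,H}`.
Hochschild cohomologies are modelled abstractly; `t K H S` is Linckelmann's transfer
map `HH*(kH) → HH*(kK)` associated to the permutation `(kK,kH)`-bimodule `k[S]` for a
`(K,H)`-stable subset `S ⊆ G`.  Thus `r^G_K = t K ⊤ Set.univ`, `t^G_H = t ⊤ H Set.univ`,
`c_{g,H} = t (ᵍH) H (g•H)`, `r^{ᵍH}_{K∩ᵍH} = t (K⊓ᵍH) (ᵍH) ↑(ᵍH)` and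
`t^K_{K∩ᵍH} = t K (K⊓ᵍH) ↑K`.  The hypotheses are the composition rule
`t_M ∘ t_N = t_{M⊗N}` (under the freeness condition making
`k[S] ⊗_{kM} k[S'] ≅ k[S·S']`) and additivity of `t` in disjoint unions of bisets,
corresponding to `kG ≅ ⊕_{g∈[K\G/H]} kK ⊗_{k[K∩ᵍH]} k[gH] ≅ ⊕ k[KgH]`. -/
theorem stmt12 {k : Type*} [CommRing k] {G : Type*} [Group G] [Finite G]
    (HH : Subgroup G → Type*) [∀ Q, AddCommGroup (HH Q)] [∀ Q, Module k (HH Q)]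
    (t : ∀ (K H : Subgroup G), Set G → (HH H →ₗ[k] HH K))
    (hcomp : ∀ (K M L : Subgroup G) (S S' : Set G),
      (∀ x ∈ K, ∀ s ∈ S, x * s ∈ S) → (∀ s ∈ S, ∀ m ∈ M, s * m ∈ S) →
      (∀ m ∈ M, ∀ s ∈ S', m * s ∈ S') → (∀ s ∈ S', ∀ l ∈ L, s * l ∈ S') →
      (∀ s₁ ∈ S, ∀ s₂ ∈ S, ∀ u₁ ∈ S', ∀ u₂ ∈ S',
        s₁ * u₁ = s₂ * u₂ → ∃ m ∈ M, s₂ = s₁ * m ∧ u₂ = m⁻¹ * u₁) →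
      (t K M S) ∘ₗ (t M L S') = t K L (S * S'))
    (hadd : ∀ (K H : Subgroup G) (I : Finset G) (F : G → Set G),
      (∀ i ∈ I, ∀ j ∈ I, i ≠ j → Disjoint (F i) (F j)) →
      t K H (⋃ i ∈ I, F i) = ∑ i ∈ I, t K H (F i))
    (K H : Subgroup G) (R : Finset G)
    (hR : ∀ q : G, ∃! r, r ∈ R ∧ ∃ x ∈ K, ∃ h ∈ H, q = x * r * h) :
    (t K ⊤ Set.univ) ∘ₗ (t ⊤ H Set.univ)
      = ∑ g ∈ R,
          (t K (K ⊓ H.map (MulAut.conj g).toMonoidHom) (K : Set G)) ∘ₗ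
          (t (K ⊓ H.map (MulAut.conj g).toMonoidHom) (H.map (MulAut.conj g).toMonoidHom)
              ((H.map (MulAut.conj g).toMonoidHom : Subgroup G) : Set G)) ∘ₗ
          (t (H.map (MulAut.conj g).toMonoidHom) H ((g * ·) '' (H : Set G))) := by
  classical
  set F : G → Set G := fun g => (K : Set G) * ((g * ·) '' (H : Set G)) with hF
  -- LHS equals t K H univ
  have hL : (t K ⊤ Set.univ) ∘ₗ (t ⊤ H Set.univ) = t K H Set.univ := by
    rw [hcomp K ⊤ H Set.univ Set.univ (by simp) (by simp) (by simp) (by simp)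
      (fun s₁ _ s₂ _ u₁ _ u₂ _ h =>
        ⟨s₁⁻¹ * s₂, Subgroup.mem_top _, (mul_inv_cancel_left s₁ s₂).symm, aux_cancel h⟩),
      Set.univ_mul_univ]
  -- the union of the double cosets is everything
  have hU : (⋃ i ∈ R, F i) = Set.univ := by
    ext q
    simp only [Set.mem_iUnion, Set.mem_univ, iff_true]
    obtain ⟨r, ⟨hrR, x, hx, h, hh, hq⟩, -⟩ := hR q
    refine ⟨r, hrR, ?_⟩
    have : x * (r * h) ∈ F r := Set.mul_mem_mul hx ⟨h, hh, rfl⟩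
    rwa [← mul_assoc, ← hq] at this
  -- disjointness of distinct double cosets
  have hD : ∀ i ∈ R, ∀ j ∈ R, i ≠ j → Disjoint (F i) (F j) := by
    intro i hi j hj hij
    rw [Set.disjoint_left]
    intro q hqi hqj
    obtain ⟨x, hx, s, hs, hxs⟩ := Set.mem_mul.mp hqi
    obtain ⟨h, hh, rfl⟩ := hs
    obtain ⟨y, hy, s', hs', hys⟩ := Set.mem_mul.mp hqj
    obtain ⟨h', hh', rfl⟩ := hs'
    obtain ⟨r, -, hun⟩ := hR q
    exact hij ((hun i ⟨hi, x, hx, h, hh, by rw [← hxs, mul_assoc]⟩).trans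
      (hun j ⟨hj, y, hy, h', hh', by rw [← hys, mul_assoc]⟩).symm)
  -- each summand equals t K H (F g)
  have hterm : ∀ g : G,
      (t K (K ⊓ H.map (MulAut.conj g).toMonoidHom) (K : Set G)) ∘ₗ
      (t (K ⊓ H.map (MulAut.conj g).toMonoidHom) (H.map (MulAut.conj g).toMonoidHom)
          ((H.map (MulAut.conj g).toMonoidHom : Subgroup G) : Set G)) ∘ₗ
      (t (H.map (MulAut.conj g).toMonoidHom) H ((g * ·) '' (H : Set G)))
      = t K H (F g) := by
    intro g
    set Jg : Subgroup G := H.map (MulAut.conj g).toMonoidHom with hJg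
    have stabJ_gH : ∀ m ∈ Jg, ∀ s ∈ (g * ·) '' (H : Set G),
        m * s ∈ (g * ·) '' (H : Set G) := by
      intro m hm s hs
      obtain ⟨h', hh', rfl⟩ := (mem_conj H g m).mp hm
      obtain ⟨h, hh, rfl⟩ := hs
      exact ⟨h' * h, mul_mem hh' hh, by group⟩
    have stab_gH_H : ∀ s ∈ (g * ·) '' (H : Set G), ∀ l ∈ H,
        s * l ∈ (g * ·) '' (H : Set G) := by
      rintro s ⟨h, hh, rfl⟩ l hl
      exact ⟨h * l, mul_mem hh hl, by group⟩
    -- inner composition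
    have h1 : (t (K ⊓ Jg) Jg ((Jg : Subgroup G) : Set G)) ∘ₗ
        (t Jg H ((g * ·) '' (H : Set G)))
        = t (K ⊓ Jg) H ((Jg : Set G) * ((g * ·) '' (H : Set G))) :=
      hcomp (K ⊓ Jg) Jg H (Jg : Set G) ((g * ·) '' (H : Set G))
        (fun x hx s hs => mul_mem (Subgroup.mem_inf.mp hx).2 hs)
        (fun s hs m hm => mul_mem hs hm)
        stabJ_gH stab_gH_H
        (fun s₁ h₁ s₂ h₂ u₁ _ u₂ _ h =>
          ⟨s₁⁻¹ * s₂, mul_mem (inv_mem h₁) h₂,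
            (mul_inv_cancel_left s₁ s₂).symm, aux_cancel h⟩)
    have h2 : (Jg : Set G) * ((g * ·) '' (H : Set G)) = (g * ·) '' (H : Set G) := by
      apply Set.Subset.antisymm
      · intro q hq
        obtain ⟨m, hm, s, hs, rfl⟩ := Set.mem_mul.mp hq
        exact stabJ_gH m hm s hs
      · intro q hq
        have := Set.mul_mem_mul (one_mem Jg : (1:G) ∈ (Jg : Set G)) hq
        rwa [one_mul] at this
    -- outer composition
    have h3 : (t K (K ⊓ Jg) (K : Set G)) ∘ₗ (t (K ⊓ Jg) H ((g * ·) '' (H : Set G)))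
        = t K H ((K : Set G) * ((g * ·) '' (H : Set G))) :=
      hcomp K (K ⊓ Jg) H (K : Set G) ((g * ·) '' (H : Set G))
        (fun x hx s hs => mul_mem hx hs)
        (fun s hs m hm => mul_mem hs (Subgroup.mem_inf.mp hm).1)
        (fun m hm s hs => stabJ_gH m (Subgroup.mem_inf.mp hm).2 s hs)
        stab_gH_H
        (by
          intro s₁ hs₁ s₂ hs₂ u₁ hu₁ u₂ hu₂ h
          obtain ⟨h₁, hh₁, rfl⟩ := hu₁
          obtain ⟨h₂, hh₂, rfl⟩ := hu₂
          refine ⟨s₁⁻¹ * s₂, Subgroup.mem_inf.mpr ⟨mul_mem (inv_mem hs₁) hs₂, ?_⟩,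
            (mul_inv_cancel_left s₁ s₂).symm, aux_cancel h⟩
          exact (mem_conj H g _).mpr ⟨h₁ * h₂⁻¹, mul_mem hh₁ (inv_mem hh₂),
            by rw [aux2 h]; group⟩)
    rw [h1, h2, h3]
  rw [hL, ← hU, hadd K H R F hD]
  exact Finset.sum_congr rfl fun g _ => (hterm g).symm
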